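/- Let μ be a measure on a measurable space X and let a > 0. Let g₀, g : X → ℝ be measurable with g₀ ≥ 0 μ-almost everywhere and g ≥ a μ-almost everywhere. Then, as an inequality between Lebesgue integrals of nonnegative functions (with values in [0, ∞], and with log 0 interpreted as 0), ∫_X g₀(x)·(log(g₀(x)/g(x)))² dμ(x) ≤ (1/a) ∫_X (g(x) − g₀(x))² dμ(x). -/
import Mathlib


open MeasureTheory

lemma key_log_sq {u : ℝ} (hu : 0 < u) : u * (Real.log u) ^ 2 ≤ (u - 1) ^ 2 := by
  set s := Real.sqrt u with hs
  have hspos : 0 < s := Real.sqrt_pos.mpr hu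
  have hs2 : s ^ 2 = u := Real.sq_sqrt hu.le
  have hlog : Real.log u = 2 * Real.log s := by
    rw [hs, Real.log_sqrt hu.le]; ring
  have hsinh : Real.sinh (Real.log s) = (s - s⁻¹) / 2 := by
    rw [Real.sinh_eq, Real.exp_log hspos, Real.exp_neg, Real.exp_log hspos]
  have habs : |Real.log s| ≤ |s - s⁻¹| / 2 := by
    have h1 : |Real.log s| ≤ Real.sinh |Real.log s| := by
      rcases eq_or_lt_of_le (abs_nonneg (Real.log s)) with h | h
      · rw [← h, Real.sinh_zero]
      · exact (Real.self_lt_sinh_iff.mpr h).le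
    calc |Real.log s| ≤ Real.sinh |Real.log s| := h1
      _ = |Real.sinh (Real.log s)| := (Real.abs_sinh _).symm
      _ = |s - s⁻¹| / 2 := by rw [hsinh, abs_div, abs_of_nonneg (by norm_num : (0:ℝ) ≤ 2)]
  have hsq : (Real.log s) ^ 2 ≤ ((s - s⁻¹) / 2) ^ 2 := by
    have := sq_abs (Real.log s)
    calc (Real.log s) ^ 2 = |Real.log s| ^ 2 := (sq_abs _).symm
      _ ≤ (|s - s⁻¹| / 2) ^ 2 := by
          apply pow_le_pow_left₀ (abs_nonneg _) habs
      _ = ((s - s⁻¹) / 2) ^ 2 := by rw [div_pow, div_pow, sq_abs]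
  have : u * (Real.log u) ^ 2 = s ^ 2 * (2 * Real.log s) ^ 2 := by rw [hs2, hlog]
  rw [this]
  have : s ^ 2 * (2 * Real.log s) ^ 2 ≤ s ^ 2 * (2 * ((s - s⁻¹) / 2)) ^ 2 := by
    apply mul_le_mul_of_nonneg_left _ (sq_nonneg s)
    rw [mul_pow, mul_pow]
    exact mul_le_mul_of_nonneg_left hsq (by norm_num)
  refine this.trans_eq ?_
  have h2 : 2 * ((s - s⁻¹) / 2) = s - s⁻¹ := by ring
  rw [h2]
  have : s ^ 2 * (s - s⁻¹) ^ 2 = (s * (s - s⁻¹)) ^ 2 := by ring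
  rw [this, mul_sub, mul_inv_cancel₀ hspos.ne', ← hs2]
  ring_nf

/-- Second moment bound for the log-likelihood ratio:
`∫ g₀ (log(g₀/g))² dμ ≤ (1/a) ∫ (g - g₀)² dμ`, as Lebesgue integrals in `[0,∞]`. -/
theorem secondMoment_log_ratio_le {X : Type*} [MeasurableSpace X]
    (μ : Measure X) (a : ℝ) (ha : 0 < a)
    (g₀ g : X → ℝ) (hg₀m : Measurable g₀) (hgm : Measurable g)
    (hg₀0 : ∀ᵐ x ∂μ, 0 ≤ g₀ x) (hga : ∀ᵐ x ∂μ, a ≤ g x) :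
    ∫⁻ x, ENNReal.ofReal (g₀ x * (Real.log (g₀ x / g x)) ^ 2) ∂μ
      ≤ ENNReal.ofReal (1 / a) * ∫⁻ x, ENNReal.ofReal ((g x - g₀ x) ^ 2) ∂μ := by
  have hmul : ENNReal.ofReal (1 / a) * ∫⁻ x, ENNReal.ofReal ((g x - g₀ x) ^ 2) ∂μ
      = ∫⁻ x, ENNReal.ofReal (1 / a * (g x - g₀ x) ^ 2) ∂μ := by
    rw [← lintegral_const_mul' _ _ ENNReal.ofReal_ne_top]
    congr 1
    funext x
    rw [ENNReal.ofReal_mul (by positivity)]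
  rw [hmul]
  apply lintegral_mono_ae
  filter_upwards [hg₀0, hga] with x h0 hax
  apply ENNReal.ofReal_le_ofReal
  have hgpos : 0 < g x := ha.trans_le hax
  rcases eq_or_lt_of_le h0 with h | h
  · rw [← h]; simp; positivity
  · -- g₀ x > 0
    have hupos : 0 < g₀ x / g x := div_pos h hgpos
    have hkey := key_log_sq hupos
    have h1 : g₀ x * (Real.log (g₀ x / g x)) ^ 2
        = g x * (g₀ x / g x * (Real.log (g₀ x / g x)) ^ 2) := by
      field_simp
    rw [h1]
    have h2 : g x * (g₀ x / g x * (Real.log (g₀ x / g x)) ^ 2)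
        ≤ g x * (g₀ x / g x - 1) ^ 2 :=
      mul_le_mul_of_nonneg_left hkey hgpos.le
    refine h2.trans ?_
    have h3 : g x * (g₀ x / g x - 1) ^ 2 = (g x - g₀ x) ^ 2 / g x := by
      field_simp
      ring
    rw [h3, div_le_iff₀ hgpos, one_div, mul_comm (a⁻¹) _, mul_assoc]
    have h4 : (1:ℝ) ≤ a⁻¹ * g x := by
      rw [← inv_mul_cancel₀ ha.ne']
      exact mul_le_mul_of_nonneg_left hax (inv_nonneg.2 ha.le)
    exact le_mul_of_one_le_right (sq_nonneg _) h4
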